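/- Let q be a positive real number and w a nonzero complex number. Set z1 = q^{-1/2}*w, z2 = q^{1/2}*w, z3 = w^{-2}, and let M be the 6x6 L_B matrix with these parameters. Then the subspace spanned by v1 = f2 - q*f1, v2 = f5 - q*f3, v3 = f4 - q*f6 is invariant under M, and the characteristic polynomial of M restricted to this subspace equals (x + q^{1/2}*w^{-1})*(x^2 - q^{1/2}*w); in particular the eigenvalues are -q^{1/2}*w^{-1} and the two square roots of q^{1/2}*w. -/

import Mathlib

open Polynomial Matrix

/-- The matrix of the Iwahori-Hecke operator `L_B` on the six-dimensional space of
Iwahori-fixed vectors, in the basis `f1, ..., f6` (columns are images of basis vectors). -/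
def LB (q z1 z2 z3 : ℂ) : Matrix (Fin 6) (Fin 6) ℂ :=
  !![0,       q*z2*z3, 0,           0,             (q-1)*q*z2*z3, 0;
     z1*z3,   0,       (q-1)*z1*z3, 0,             0,             0;
     0,       0,       0,           (q-1)*q*z2*z3, 0,             q*z2*z3;
     0,       0,       0,           0,             z1*z2,         0;
     0,       0,       0,           q*z1*z3,       0,             0;
     0,       0,       z1*z2,       0,             0,             0]

theorem cons_val_five' {α : Type*} (a : α) (u : Fin 5 → α) :
    Matrix.vecCons a u 5 = u 4 := rfl

theorem cons_val_four' {α : Type*} (a : α) (u : Fin 4 → α) :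
    Matrix.vecCons a u 4 = u 3 := rfl

theorem cons_val_three' {α : Type*} (a : α) (u : Fin 3 → α) :
    Matrix.vecCons a u 3 = u 2 := rfl

theorem cons_val_two' {α : Type*} (a : α) (u : Fin 2 → α) :
    Matrix.vecCons a u 2 = u 1 := rfl

set_option maxHeartbeats 1000000 in
theorem type_e_LB_restriction (q : ℝ) (hq : 0 < q) (w : ℂ) (hw : w ≠ 0) :
    let s : ℂ := ((q ^ ((1 : ℝ)/2) : ℝ) : ℂ)
    let M := LB (q : ℂ) (s⁻¹ * w) (s * w) ((w ^ 2)⁻¹)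
    let v : Fin 3 → (Fin 6 → ℂ) :=
      ![![-(q : ℂ), 1, 0, 0, 0, 0], ![0, 0, -(q : ℂ), 0, 1, 0], ![0, 0, 0, 1, 0, -(q : ℂ)]]
    LinearIndependent ℂ v ∧
    ∃ A : Matrix (Fin 3) (Fin 3) ℂ,
      (∀ i, M.mulVec (v i) = ∑ j, A j i • v j) ∧
      A.charpoly = (X + C (s * w⁻¹)) * (X ^ 2 - C (s * w)) := by
  intro s M v
  have hsr : (0:ℝ) < q ^ ((1 : ℝ)/2) := Real.rpow_pos_of_pos hq _
  have hs : s ≠ 0 := by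
    simp only [s, Complex.ofReal_ne_zero]; exact ne_of_gt hsr
  have hs2 : (q : ℂ) = s * s := by
    have : q ^ ((1 : ℝ)/2) * q ^ ((1 : ℝ)/2) = q := by
      rw [← Real.rpow_add hq]; norm_num
    simp only [s]
    rw [← Complex.ofReal_mul, this]
  constructor
  · rw [Fintype.linearIndependent_iff]
    intro g hg
    have h1 := congrFun hg (1 : Fin 6)
    have h4 := congrFun hg (4 : Fin 6)
    have h3 := congrFun hg (3 : Fin 6)
    simp [v, Fin.sum_univ_succ, Matrix.vecHead, Matrix.vecTail] at h1 h4 h3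
    intro i
    fin_cases i <;> assumption
  · refine ⟨!![-(s * w⁻¹), -((q:ℂ)-1) * (s * w⁻¹), 0;
               0, 0, s * w⁻¹;
               0, w^2, 0], ?_, ?_⟩
    · intro i
      fin_cases i <;>
        funext x <;>
        fin_cases x <;>
        simp [M, v, LB, Matrix.mulVec, dotProduct, Fin.sum_univ_succ,
          cons_val_five', cons_val_four', cons_val_three', cons_val_two', hs2] <;>
        field_simp <;> (first | ring1 | (left; ring1) | (left; trivial))
    · rw [Matrix.charpoly, Matrix.det_fin_three]
      simp [charmatrix_apply, Matrix.one_apply, Matrix.vecHead, Matrix.vecTail]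
      have hC : (C w⁻¹ : ℂ[X]) * C w ^ 2 = C w := by
        rw [← C_pow, ← C_mul]
        congr 1
        field_simp
      linear_combination (-(X + C s * C w⁻¹)) * C s * hC
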